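/- Let μ, ν be Borel probability measures on ℝ^d with finite second moments, let π be any coupling of μ and ν, and let λ := M_#π be the pushforward of π under the midpoint map M(x,y) := (x+y)/2. Then for every nonempty finite set Z_m ⊂ ℝ^d: c^{Z_m}(μ,ν) ≤ ∫ |x−y|² dπ(x,y) + 4 ∫ min_{z∈Z_m} |w−z|² dλ(w). In particular, if π is optimal for the quadratic cost, then c^{Z_m}(μ,ν) − c(μ,ν) ≤ 4 ∫ min_{z∈Z_m} |w−z|² dλ(w). -/

import Mathlib

open MeasureTheory

/-- Kantorovich optimal transport cost between `μ` and `ν` for the cost `c`. -/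
noncomputable def kant {X Y : Type*} [MeasurableSpace X] [MeasurableSpace Y]
    (μ : Measure X) (ν : Measure Y) (c : X → Y → ℝ) : ℝ :=
  sInf {t : ℝ | ∃ π : Measure (X × Y), IsProbabilityMeasure π ∧
    π.map Prod.fst = μ ∧ π.map Prod.snd = ν ∧ t = ∫ q, c q.1 q.2 ∂π}

lemma add_ciInf_fin {ι : Type*} [Finite ι] [Nonempty ι] (a : ℝ) (f : ι → ℝ) :
    a + ⨅ i, f i = ⨅ i, (a + f i) := by
  have hbdd : BddBelow (Set.range f) := Set.Finite.bddBelow (Set.finite_range f)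
  obtain ⟨i₀, hi₀⟩ := Finite.exists_min f
  have hinf : (⨅ i, f i) = f i₀ :=
    le_antisymm (ciInf_le hbdd i₀) (le_ciInf hi₀)
  refine le_antisymm (le_ciInf fun i => by
    have := ciInf_le hbdd i; linarith) ?_
  have : (⨅ i, (a + f i)) ≤ a + f i₀ :=
    ciInf_le (Set.Finite.bddBelow (Set.finite_range _)) i₀
  rw [hinf]; exact this

/-- for any coupling `π` of `μ, ν` with midpoint pushforward `λ = M_#π`,
`c^{Z_m}(μ,ν) ≤ ∫|x−y|² dπ + 4∫ min_{z∈Z_m}|w−z|² dλ`; if `π` is optimal for the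
quadratic cost then `c^{Z_m}(μ,ν) − c(μ,ν) ≤ 4∫ min_{z∈Z_m}|w−z|² dλ`. -/
theorem stmt_18
    (d : ℕ)
    (μ ν : Measure (EuclideanSpace ℝ (Fin d)))
    [IsProbabilityMeasure μ] [IsProbabilityMeasure ν]
    (hmomμ : Integrable (fun x : EuclideanSpace ℝ (Fin d) => ‖x‖ ^ 2) μ)
    (hmomν : Integrable (fun y : EuclideanSpace ℝ (Fin d) => ‖y‖ ^ 2) ν)
    (π : Measure (EuclideanSpace ℝ (Fin d) × EuclideanSpace ℝ (Fin d)))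
    [IsProbabilityMeasure π]
    (hπ1 : π.map Prod.fst = μ) (hπ2 : π.map Prod.snd = ν)
    (lam : Measure (EuclideanSpace ℝ (Fin d)))
    (hlam : lam = π.map (fun q => (2 : ℝ)⁻¹ • (q.1 + q.2)))
    (Zm : Finset (EuclideanSpace ℝ (Fin d))) (hZm : Zm.Nonempty) :
    kant μ ν (fun x y => 2 * ⨅ z : Zm, (‖x - (z : EuclideanSpace ℝ (Fin d))‖ ^ 2
        + ‖y - (z : EuclideanSpace ℝ (Fin d))‖ ^ 2))
      ≤ (∫ q, ‖q.1 - q.2‖ ^ 2 ∂π)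
        + 4 * ∫ w, (⨅ z : Zm, ‖w - (z : EuclideanSpace ℝ (Fin d))‖ ^ 2) ∂lam ∧
    ((∫ q, ‖q.1 - q.2‖ ^ 2 ∂π) = kant μ ν (fun x y => ‖x - y‖ ^ 2) →
      kant μ ν (fun x y => 2 * ⨅ z : Zm, (‖x - (z : EuclideanSpace ℝ (Fin d))‖ ^ 2
          + ‖y - (z : EuclideanSpace ℝ (Fin d))‖ ^ 2))
        - kant μ ν (fun x y => ‖x - y‖ ^ 2)
        ≤ 4 * ∫ w, (⨅ z : Zm, ‖w - (z : EuclideanSpace ℝ (Fin d))‖ ^ 2) ∂lam) := by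
  classical
  haveI : Nonempty Zm := ⟨⟨hZm.choose, hZm.choose_spec⟩⟩
  obtain ⟨z₀, hz₀⟩ := hZm
  -- pointwise key identity
  have key : ∀ x y : (EuclideanSpace ℝ (Fin d)), (2 : ℝ) * ⨅ z : Zm, (‖x - (z : (EuclideanSpace ℝ (Fin d)))‖ ^ 2 + ‖y - (z : (EuclideanSpace ℝ (Fin d)))‖ ^ 2)
      = ‖x - y‖ ^ 2 + 4 * ⨅ z : Zm, ‖(2 : ℝ)⁻¹ • (x + y) - (z : (EuclideanSpace ℝ (Fin d)))‖ ^ 2 := by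
    intro x y
    have hpt : ∀ z : Zm, (2 : ℝ) * (‖x - (z : (EuclideanSpace ℝ (Fin d)))‖ ^ 2 + ‖y - (z : (EuclideanSpace ℝ (Fin d)))‖ ^ 2)
        = ‖x - y‖ ^ 2 + 4 * ‖(2 : ℝ)⁻¹ • (x + y) - (z : (EuclideanSpace ℝ (Fin d)))‖ ^ 2 := by
      intro z
      have hz : (2 : ℝ)⁻¹ • (x + y) - (z : (EuclideanSpace ℝ (Fin d)))
          = (2 : ℝ)⁻¹ • ((x - (z : (EuclideanSpace ℝ (Fin d)))) + (y - (z : (EuclideanSpace ℝ (Fin d))))) := by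
        module
      have hxy : x - y = (x - (z : (EuclideanSpace ℝ (Fin d)))) - (y - (z : (EuclideanSpace ℝ (Fin d)))) := by abel
      have hpar := parallelogram_law_with_norm ℝ (x - (z : (EuclideanSpace ℝ (Fin d)))) (y - (z : (EuclideanSpace ℝ (Fin d))))
      have hnorm : ‖(2 : ℝ)⁻¹ • ((x - (z : (EuclideanSpace ℝ (Fin d)))) + (y - (z : (EuclideanSpace ℝ (Fin d)))))‖
          = (2 : ℝ)⁻¹ * ‖(x - (z : (EuclideanSpace ℝ (Fin d)))) + (y - (z : (EuclideanSpace ℝ (Fin d))))‖ := by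
        rw [norm_smul]; norm_num
      rw [hz, hnorm, hxy]
      nlinarith [hpar]
    rw [Real.mul_iInf_of_nonneg (by norm_num : (0:ℝ) ≤ 2),
        Real.mul_iInf_of_nonneg (by norm_num : (0:ℝ) ≤ 4),
        add_ciInf_fin]
    exact iInf_congr hpt
  -- measurability of the inf functions
  have hginfmeas : Measurable (fun w : (EuclideanSpace ℝ (Fin d)) => ⨅ z : Zm, ‖w - (z : (EuclideanSpace ℝ (Fin d)))‖ ^ 2) :=
    Measurable.iInf fun z => ((continuous_id.sub continuous_const).norm.pow 2).measurable
  have hmid : Measurable (fun q : (EuclideanSpace ℝ (Fin d)) × (EuclideanSpace ℝ (Fin d)) => (2 : ℝ)⁻¹ • (q.1 + q.2)) :=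
    (by fun_prop : Continuous (fun q : (EuclideanSpace ℝ (Fin d)) × (EuclideanSpace ℝ (Fin d)) => (2 : ℝ)⁻¹ • (q.1 + q.2))).measurable
  -- integrability
  have hint1 : Integrable (fun q : (EuclideanSpace ℝ (Fin d)) × (EuclideanSpace ℝ (Fin d)) => ‖q.1‖ ^ 2) π := by
    rw [← hπ1] at hmomμ
    exact (integrable_map_measure (continuous_norm.pow 2).aestronglyMeasurable
      measurable_fst.aemeasurable).mp hmomμ
  have hint2 : Integrable (fun q : (EuclideanSpace ℝ (Fin d)) × (EuclideanSpace ℝ (Fin d)) => ‖q.2‖ ^ 2) π := by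
    rw [← hπ2] at hmomν
    exact (integrable_map_measure (continuous_norm.pow 2).aestronglyMeasurable
      measurable_snd.aemeasurable).mp hmomν
  have hF : Integrable (fun q : (EuclideanSpace ℝ (Fin d)) × (EuclideanSpace ℝ (Fin d)) => ‖q.1 - q.2‖ ^ 2) π := by
    refine Integrable.mono' ((hint1.const_mul 2).add (hint2.const_mul 2))
      (((continuous_fst.sub continuous_snd).norm.pow 2).aestronglyMeasurable)
      (ae_of_all _ fun q => ?_)
    simp only [Pi.add_apply]
    have h1 : ‖q.1 - q.2‖ ≤ ‖q.1‖ + ‖q.2‖ := norm_sub_le _ _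
    have h2 : (0:ℝ) ≤ ‖q.1 - q.2‖ := norm_nonneg _
    rw [Real.norm_eq_abs, abs_of_nonneg (by positivity)]
    nlinarith [mul_self_le_mul_self h2 h1, sq_nonneg (‖q.1‖ - ‖q.2‖)]
  have hbddr : ∀ w : (EuclideanSpace ℝ (Fin d)), BddBelow (Set.range fun z : Zm => ‖w - (z : (EuclideanSpace ℝ (Fin d)))‖ ^ 2) :=
    fun w => Set.Finite.bddBelow (Set.finite_range _)
  have hinf_nonneg : ∀ w : (EuclideanSpace ℝ (Fin d)), (0:ℝ) ≤ ⨅ z : Zm, ‖w - (z : (EuclideanSpace ℝ (Fin d)))‖ ^ 2 :=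
    fun w => le_ciInf fun z => by positivity
  have hinf_le : ∀ w : (EuclideanSpace ℝ (Fin d)), (⨅ z : Zm, ‖w - (z : (EuclideanSpace ℝ (Fin d)))‖ ^ 2) ≤ ‖w - z₀‖ ^ 2 :=
    fun w => ciInf_le (hbddr w) ⟨z₀, hz₀⟩
  have hf : Integrable (fun q : (EuclideanSpace ℝ (Fin d)) × (EuclideanSpace ℝ (Fin d)) => ⨅ z : Zm, ‖(2 : ℝ)⁻¹ • (q.1 + q.2) - (z : (EuclideanSpace ℝ (Fin d)))‖ ^ 2) π := by
    refine Integrable.mono' ((hint1.add hint2).add (integrable_const (2 * ‖z₀‖ ^ 2)))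
      ((hginfmeas.comp hmid).aestronglyMeasurable) (ae_of_all _ fun q => ?_)
    simp only [Pi.add_apply]
    set m := (2 : ℝ)⁻¹ • (q.1 + q.2) with hm
    rw [Real.norm_eq_abs, abs_of_nonneg (hinf_nonneg m)]
    have h1 : (⨅ z : Zm, ‖m - (z : (EuclideanSpace ℝ (Fin d)))‖ ^ 2) ≤ ‖m - z₀‖ ^ 2 := hinf_le m
    have h2 : ‖m - z₀‖ ≤ ‖m‖ + ‖z₀‖ := norm_sub_le _ _
    have h3 : ‖m‖ ≤ (2:ℝ)⁻¹ * (‖q.1‖ + ‖q.2‖) := by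
      rw [hm, norm_smul]
      simp only [norm_inv, Real.norm_ofNat]
      gcongr
      exact norm_add_le _ _
    have h4 : (0:ℝ) ≤ ‖m - z₀‖ := norm_nonneg _
    nlinarith [mul_self_le_mul_self h4 h2, mul_self_le_mul_self (norm_nonneg m) h3,
      sq_nonneg (‖m‖ - ‖z₀‖), sq_nonneg (‖q.1‖ - ‖q.2‖)]
  -- value of the cost integral
  have hcost : (∫ q : (EuclideanSpace ℝ (Fin d)) × (EuclideanSpace ℝ (Fin d)), (2 : ℝ) * ⨅ z : Zm, (‖q.1 - (z : (EuclideanSpace ℝ (Fin d)))‖ ^ 2 + ‖q.2 - (z : (EuclideanSpace ℝ (Fin d)))‖ ^ 2) ∂π)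
      = (∫ q, ‖q.1 - q.2‖ ^ 2 ∂π)
        + 4 * ∫ w, (⨅ z : Zm, ‖w - (z : (EuclideanSpace ℝ (Fin d)))‖ ^ 2) ∂lam := by
    have heq : (∫ q : (EuclideanSpace ℝ (Fin d)) × (EuclideanSpace ℝ (Fin d)), (2 : ℝ) * ⨅ z : Zm, (‖q.1 - (z : (EuclideanSpace ℝ (Fin d)))‖ ^ 2 + ‖q.2 - (z : (EuclideanSpace ℝ (Fin d)))‖ ^ 2) ∂π)
        = ∫ q : (EuclideanSpace ℝ (Fin d)) × (EuclideanSpace ℝ (Fin d)), (‖q.1 - q.2‖ ^ 2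
            + 4 * ⨅ z : Zm, ‖(2 : ℝ)⁻¹ • (q.1 + q.2) - (z : (EuclideanSpace ℝ (Fin d)))‖ ^ 2) ∂π := by
      exact integral_congr_ae (ae_of_all _ fun q => key q.1 q.2)
    rw [heq, integral_add hF (hf.const_mul 4), integral_const_mul]
    congr 1
    rw [hlam, integral_map hmid.aemeasurable hginfmeas.aestronglyMeasurable]
  -- membership and lower bound of the kant set
  have hmem : (∫ q, ‖q.1 - q.2‖ ^ 2 ∂π)
        + 4 * (∫ w, (⨅ z : Zm, ‖w - (z : (EuclideanSpace ℝ (Fin d)))‖ ^ 2) ∂lam)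
      ∈ {t : ℝ | ∃ π' : Measure ((EuclideanSpace ℝ (Fin d)) × (EuclideanSpace ℝ (Fin d))), IsProbabilityMeasure π' ∧
        π'.map Prod.fst = μ ∧ π'.map Prod.snd = ν ∧
        t = ∫ q, (fun x y => 2 * ⨅ z : Zm, (‖x - (z : (EuclideanSpace ℝ (Fin d)))‖ ^ 2 + ‖y - (z : (EuclideanSpace ℝ (Fin d)))‖ ^ 2)) q.1 q.2 ∂π'} :=
    ⟨π, inferInstance, hπ1, hπ2, hcost.symm⟩
  have hbdd : BddBelow {t : ℝ | ∃ π' : Measure ((EuclideanSpace ℝ (Fin d)) × (EuclideanSpace ℝ (Fin d))), IsProbabilityMeasure π' ∧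
        π'.map Prod.fst = μ ∧ π'.map Prod.snd = ν ∧
        t = ∫ q, (fun x y => 2 * ⨅ z : Zm, (‖x - (z : (EuclideanSpace ℝ (Fin d)))‖ ^ 2 + ‖y - (z : (EuclideanSpace ℝ (Fin d)))‖ ^ 2)) q.1 q.2 ∂π'} := by
    refine ⟨0, fun t ht => ?_⟩
    obtain ⟨π', hp, -, -, rfl⟩ := ht
    refine integral_nonneg fun q => ?_
    have : (0:ℝ) ≤ ⨅ z : Zm, (‖q.1 - (z : (EuclideanSpace ℝ (Fin d)))‖ ^ 2 + ‖q.2 - (z : (EuclideanSpace ℝ (Fin d)))‖ ^ 2) :=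
      le_ciInf fun z => by positivity
    positivity
  have hmain : kant μ ν (fun x y => 2 * ⨅ z : Zm, (‖x - (z : (EuclideanSpace ℝ (Fin d)))‖ ^ 2 + ‖y - (z : (EuclideanSpace ℝ (Fin d)))‖ ^ 2))
      ≤ (∫ q, ‖q.1 - q.2‖ ^ 2 ∂π)
        + 4 * ∫ w, (⨅ z : Zm, ‖w - (z : (EuclideanSpace ℝ (Fin d)))‖ ^ 2) ∂lam := csInf_le hbdd hmem
  exact ⟨hmain, fun hopt => by linarith [hmain, hopt.symm ▸ hmain]⟩
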